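/- Let K ≥ 1, κ > 0, let (π_j)_{j≥1} be nonnegative reals with ∑_{j≥1} π_j = 1 and β := ∑_{j≥1} j π_j < ∞, and let x ∈ ℝ^K have nonnegative entries with S_K ≤ 1. For i ∈ {1,…,K} define μ_i(x) := κ ∑_{j=1}^∞ π_j (S_i^{j+1} − S_{i−1}^{j+1} − x_i). Then for every i, |μ_i(x)| ≤ 2 κ β x_i (1 − x_i). -/
import Mathlib


open Finset

lemma key_ineq (a b : ℝ) (ha : 0 ≤ a) (hab : a ≤ b) (hb : b ≤ 1) (n : ℕ) :
    |b ^ (n + 2) - a ^ (n + 2) - (b - a)| ≤ 2 * (n + 1) * ((b - a) * (1 - (b - a))) := by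
  have h0b : 0 ≤ b := ha.trans hab
  have hgeom := geom_sum₂_mul b a (n + 2)
  set T : ℝ := ∑ i ∈ range (n + 2), b ^ i * a ^ (n + 2 - 1 - i) with hT
  have hfac : b ^ (n + 2) - a ^ (n + 2) - (b - a) = (T - 1) * (b - a) := by
    rw [← hgeom]; ring
  -- bound the "lower" part of the sum
  have hP : ∑ i ∈ range (n + 1), b ^ i * a ^ (n + 2 - 1 - i) ≤ (n + 1) * a := by
    calc ∑ i ∈ range (n + 1), b ^ i * a ^ (n + 2 - 1 - i)
        ≤ ∑ _i ∈ range (n + 1), a := by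
          apply Finset.sum_le_sum
          intro i hi
          have hi' : i < n + 1 := Finset.mem_range.mp hi
          have hk : n + 2 - 1 - i ≠ 0 := by omega
          have h1 : b ^ i ≤ 1 := pow_le_one₀ h0b hb
          have h2 : a ^ (n + 2 - 1 - i) ≤ a :=
            pow_le_of_le_one ha (hab.trans hb) hk
          have h3 : 0 ≤ a ^ (n + 2 - 1 - i) := pow_nonneg ha _
          calc b ^ i * a ^ (n + 2 - 1 - i) ≤ 1 * a ^ (n + 2 - 1 - i) :=
                mul_le_mul_of_nonneg_right h1 h3
            _ = a ^ (n + 2 - 1 - i) := one_mul _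
            _ ≤ a := h2
      _ = (n + 1) * a := by simp [mul_comm]
  have hP0 : 0 ≤ ∑ i ∈ range (n + 1), b ^ i * a ^ (n + 2 - 1 - i) := by
    apply Finset.sum_nonneg
    intro i _
    exact mul_nonneg (pow_nonneg h0b _) (pow_nonneg ha _)
  -- 1 - b^(n+1) ≤ (n+1)(1-b)
  have hbpow_le : b ^ (n + 1) ≤ 1 := pow_le_one₀ h0b hb
  have hbern : 1 - b ^ (n + 1) ≤ (n + 1) * (1 - b) := by
    have hg := geom_sum_mul b (n + 1)
    have hsum : ∑ i ∈ range (n + 1), b ^ i ≤ (n + 1) := by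
      calc ∑ i ∈ range (n + 1), b ^ i ≤ ∑ _i ∈ range (n + 1), (1 : ℝ) :=
            Finset.sum_le_sum fun i _ => pow_le_one₀ h0b hb
        _ = (n + 1) := by simp
    have h1b : 0 ≤ 1 - b := by linarith
    have : 1 - b ^ (n + 1) = (∑ i ∈ range (n + 1), b ^ i) * (1 - b) := by
      linear_combination hg
    rw [this]
    exact mul_le_mul_of_nonneg_right hsum h1b
  -- decompose T
  have hTsplit : T = (∑ i ∈ range (n + 1), b ^ i * a ^ (n + 2 - 1 - i)) + b ^ (n + 1) := by
    rw [hT, Finset.sum_range_succ]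
    simp
  have hx0 : 0 ≤ b - a := by linarith
  have hx1 : b - a ≤ 1 := by linarith
  have ha1 : a ≤ 1 - (b - a) := by linarith
  have hb1 : 1 - b ≤ 1 - (b - a) := by linarith
  have habs : |T - 1| ≤ 2 * (n + 1) * (1 - (b - a)) := by
    rw [abs_le]
    constructor
    · have h4 : (0:ℝ) ≤ ((n:ℝ)+1) * (1 - (b-a)) :=
        mul_nonneg (by positivity) (by linarith)
      nlinarith [hbern, hP0]
    · nlinarith [hP, hbpow_le]
  rw [hfac, abs_mul, abs_of_nonneg hx0]
  calc |T - 1| * (b - a) ≤ (2 * (n + 1) * (1 - (b - a))) * (b - a) :=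
        mul_le_mul_of_nonneg_right habs hx0
    _ = 2 * (n + 1) * ((b - a) * (1 - (b - a))) := by ring

set_option maxHeartbeats 1000000 in
/-- Transitive-ordering case of Lemma 3.10: |μ_i(x)| ≤ 2κβ x_i(1−x_i), where
β = ∑_{j≥1} j π_j. The index j ≥ 1 of the paper is encoded as j+1 with j : ℕ. -/
theorem stmt12 (K : ℕ) (hK : 1 ≤ K) (κ : ℝ) (hκ : 0 < κ)
    (π : ℕ → ℝ) (hπ : ∀ j, 1 ≤ j → 0 ≤ π j) (hπsum : ∑' j : ℕ, π (j + 1) = 1)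
    (hβsum : Summable (fun j : ℕ => (j + 1 : ℝ) * π (j + 1)))
    (β : ℝ) (hβ : β = ∑' j : ℕ, (j + 1 : ℝ) * π (j + 1))
    (x : ℕ → ℝ) (hx : ∀ i ∈ Icc 1 K, 0 ≤ x i)
    (S : ℕ → ℝ) (hS : ∀ j, S j = ∑ k ∈ Icc 1 j, x k) (hSK : S K ≤ 1)
    (μ : ℕ → ℝ)
    (hμ : ∀ i ∈ Icc 1 K,
      μ i = κ * ∑' j : ℕ, π (j + 1) * (S i ^ (j + 2) - S (i - 1) ^ (j + 2) - x i)) :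
    ∀ i ∈ Icc 1 K, |μ i| ≤ 2 * κ * β * (x i * (1 - x i)) := by
  intro i hi
  have hi' := Finset.mem_Icc.mp hi
  obtain ⟨hi1, hiK⟩ := hi'
  set a := S (i - 1) with haDef
  set b := S i with hbDef
  have hxi : 0 ≤ x i := hx i hi
  -- b = a + x i
  have hba : b = a + x i := by
    obtain ⟨m, rfl⟩ : ∃ m, i = m + 1 := ⟨i - 1, by omega⟩
    rw [hbDef, haDef, hS, hS]
    simp only [Nat.add_sub_cancel]
    rw [Finset.sum_Icc_succ_top (by omega : 1 ≤ m + 1)]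
  -- 0 ≤ a
  have ha0 : 0 ≤ a := by
    rw [haDef, hS]
    apply Finset.sum_nonneg
    intro k hk
    have hk' := Finset.mem_Icc.mp hk
    exact hx k (Finset.mem_Icc.mpr ⟨hk'.1, by omega⟩)
  -- b ≤ 1
  have hb1 : b ≤ 1 := by
    have hsub : S i ≤ S K := by
      rw [hS, hS]
      apply Finset.sum_le_sum_of_subset_of_nonneg
      · exact Finset.Icc_subset_Icc_right hiK
      · intro k hk _
        exact hx k hk
    linarith [hSK]
  have hab : a ≤ b := by linarith
  have hxab : x i = b - a := by linarith
  -- set up tsum bound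
  set f : ℕ → ℝ := fun j => π (j + 1) * (b ^ (j + 2) - a ^ (j + 2) - x i) with hf
  set g : ℕ → ℝ := fun j => ((j + 1 : ℝ) * π (j + 1)) * (2 * (x i * (1 - x i))) with hg
  have hle : ∀ j, |f j| ≤ g j := by
    intro j
    have hπj : 0 ≤ π (j + 1) := hπ (j + 1) (by omega)
    have hk := key_ineq a b ha0 hab hb1 j
    rw [← hxab] at hk
    calc |f j| = π (j + 1) * |b ^ (j + 2) - a ^ (j + 2) - x i| := by
          rw [hf]; simp [abs_mul, abs_of_nonneg hπj]
      _ ≤ π (j + 1) * (2 * (j + 1) * (x i * (1 - x i))) :=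
          mul_le_mul_of_nonneg_left hk hπj
      _ = g j := by rw [hg]; ring
  have hgsum : Summable g := hβsum.mul_right _
  have habs_sum : Summable (fun j => |f j|) :=
    Summable.of_nonneg_of_le (fun j => abs_nonneg _) hle hgsum
  have hfsum : Summable f := habs_sum.of_abs
  have h1 : |∑' j, f j| ≤ ∑' j, |f j| := by
    have := norm_tsum_le_tsum_norm (f := f)
      (by simpa only [Real.norm_eq_abs] using habs_sum)
    simpa only [Real.norm_eq_abs] using this
  have h2 : ∑' j, |f j| ≤ ∑' j, g j := Summable.tsum_le_tsum hle habs_sum hgsum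
  have h3 : ∑' j, g j = β * (2 * (x i * (1 - x i))) := by
    rw [hg, tsum_mul_right, hβ]
  have hμi := hμ i hi
  rw [hμi, abs_mul, abs_of_pos hκ]
  have : |∑' j : ℕ, π (j + 1) * (b ^ (j + 2) - a ^ (j + 2) - x i)| ≤
      β * (2 * (x i * (1 - x i))) := by
    rw [← h3]
    exact le_trans h1 h2
  calc κ * |∑' j : ℕ, π (j + 1) * (b ^ (j + 2) - a ^ (j + 2) - x i)|
      ≤ κ * (β * (2 * (x i * (1 - x i)))) :=
        mul_le_mul_of_nonneg_left this hκ.le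
    _ = 2 * κ * β * (x i * (1 - x i)) := by ring
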